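/- (Quadratic regime.) Let c > 0 be a real and let m : ℕ → ℕ be a sequence with m(n)/n² → c. Then P₂(m(n), n)/n → √(2c) · D₊(1/√(2c)) as n → ∞, where D₊(y) := (1/2) ∫_0^{∞} exp(−t²/4) · sin(yt) dt is the Dawson function. -/

import Mathlib

open Filter Real MeasureTheory Set

/-- The normalized average outcome-collision probability of an `n`-photon, `m`-mode Fock
boson sampler averaged over Haar-random interferometers (integral representation). -/
noncomputable def P2 (m n : ℕ) : ℝ :=
  ((n : ℝ) + m - 1) *
    ∫ θ in (0:ℝ)..(Real.pi / 2), Real.cos θ ^ (n + m - 2) * Real.sin ((n + 1) * θ)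

/-- The Dawson function `D₊(y) = (1/2) ∫_0^∞ exp(-t²/4) sin(y t) dt`. -/
noncomputable def dawson (y : ℝ) : ℝ :=
  (1 / 2) * ∫ t in Set.Ioi (0:ℝ), Real.exp (-t ^ 2 / 4) * Real.sin (y * t)

/-- Quadratic regime. If `m n / n² → c` then
`P₂(m n, n)/n → √(2c) · D₊(1/√(2c))`. -/
lemma lemA1 : Tendsto (fun u : ℝ => Real.log (1 - u) / u) (nhdsWithin 0 {0}ᶜ) (nhds (-1)) := by
  have h1 : HasDerivAt (fun x : ℝ => 1 - x) (-1) 0 := (hasDerivAt_id 0).const_sub 1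
  have h2 : HasDerivAt (fun x : ℝ => Real.log (1 - x)) (-1) 0 := by
    have := (Real.hasDerivAt_log (by norm_num : (1:ℝ) - 0 ≠ 0)).comp 0 h1
    simpa [Function.comp_def] using this
  have h3 := hasDerivAt_iff_tendsto_slope.mp h2
  refine h3.congr' ?_
  filter_upwards [self_mem_nhdsWithin] with u hu
  simp [slope_def_field]

lemma lemA2 : Tendsto (fun s : ℝ => (1 - Real.cos s) / s ^ 2) (nhdsWithin 0 {0}ᶜ) (nhds (1/2)) := by
  have hsin : Tendsto (fun x : ℝ => Real.sin x / x) (nhdsWithin 0 {0}ᶜ) (nhds 1) := by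
    have := hasDerivAt_iff_tendsto_slope.mp (Real.hasDerivAt_sin 0)
    rw [Real.cos_zero] at this
    refine this.congr' ?_
    filter_upwards [self_mem_nhdsWithin] with u hu
    simp [slope_def_field]
  have hmap : Tendsto (fun s : ℝ => s / 2) (nhdsWithin 0 {0}ᶜ) (nhdsWithin 0 {0}ᶜ) := by
    refine tendsto_nhdsWithin_iff.mpr ⟨?_, ?_⟩
    · have : Tendsto (fun s : ℝ => s / 2) (nhds 0) (nhds 0) := by
        have h := ((continuous_id.div_const 2).tendsto (0:ℝ))
        simpa using h
      exact this.mono_left nhdsWithin_le_nhds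
    · filter_upwards [self_mem_nhdsWithin] with u hu
      simp only [mem_compl_iff, mem_singleton_iff] at hu ⊢
      intro h; exact hu (by linarith [h])
  have h2 : Tendsto (fun s : ℝ => Real.sin (s/2) / (s/2)) (nhdsWithin 0 {0}ᶜ) (nhds 1) :=
    hsin.comp hmap
  have h3 : Tendsto (fun s : ℝ => (1/2) * (Real.sin (s/2) / (s/2)) ^ 2)
      (nhdsWithin 0 {0}ᶜ) (nhds (1/2)) := by
    have := ((h2.pow 2).const_mul (1/2 : ℝ))
    simpa using this
  refine h3.congr' ?_
  filter_upwards [self_mem_nhdsWithin] with s hs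
  simp only [mem_compl_iff, mem_singleton_iff] at hs
  have : Real.cos s = 1 - 2 * Real.sin (s/2) ^ 2 := by
    have := Real.sin_sq_eq_half_sub (s/2)
    have h4 : 2 * (s/2) = s := by ring
    rw [h4] at this
    linarith
  rw [this]
  field_simp
  ring

lemma lemA : Tendsto (fun s : ℝ => Real.log (Real.cos s) / s ^ 2)
    (nhdsWithin 0 (Ioi 0)) (nhds (-(1/2))) := by
  have hu : Tendsto (fun s : ℝ => 1 - Real.cos s) (nhdsWithin 0 (Ioi 0)) (nhdsWithin 0 {0}ᶜ) := by
    refine tendsto_nhdsWithin_iff.mpr ⟨?_, ?_⟩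
    · have hcont : Continuous fun s : ℝ => 1 - Real.cos s := by continuity
      have h := hcont.tendsto (0:ℝ)
      simp only [Real.cos_zero, sub_self] at h
      exact h.mono_left nhdsWithin_le_nhds
    · filter_upwards [Ioo_mem_nhdsGT_of_mem (by constructor <;> [rfl; exact Real.pi_div_two_pos])]
        with s hs
      have : Real.cos s < 1 := by
        calc Real.cos s < Real.cos 0 := by
              apply Real.cos_lt_cos_of_nonneg_of_le_pi le_rfl
                (by linarith [hs.2, Real.pi_div_two_pos, Real.pi_pos]) hs.1
        _ = 1 := Real.cos_zero
      simp only [mem_compl_iff, mem_singleton_iff]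
      intro h; rw [sub_eq_zero] at h; exact absurd h.symm (ne_of_lt this)
  have hle : nhdsWithin (0:ℝ) (Ioi 0) ≤ nhdsWithin 0 {0}ᶜ :=
    nhdsWithin_mono 0 (fun x hx => by simp only [mem_compl_iff, mem_singleton_iff]; exact ne_of_gt hx)
  have h1 : Tendsto (fun s : ℝ => Real.log (1 - (1 - Real.cos s)) / (1 - Real.cos s))
      (nhdsWithin 0 (Ioi 0)) (nhds (-1)) := lemA1.comp hu
  have h2 : Tendsto (fun s : ℝ => (1 - Real.cos s) / s ^ 2) (nhdsWithin 0 (Ioi 0)) (nhds (1/2)) :=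
    lemA2.mono_left hle
  have h3 := h1.mul h2
  rw [show (-1 : ℝ) * (1/2) = -(1/2) by ring] at h3
  refine h3.congr' ?_
  filter_upwards [Ioo_mem_nhdsGT_of_mem (by constructor <;> [rfl; exact Real.pi_div_two_pos])]
    with s hs
  have hcos1 : Real.cos s < 1 := by
    calc Real.cos s < Real.cos 0 := by
          apply Real.cos_lt_cos_of_nonneg_of_le_pi le_rfl
            (by linarith [hs.2, Real.pi_div_two_pos, Real.pi_pos]) hs.1
    _ = 1 := Real.cos_zero
  have hne : 1 - Real.cos s ≠ 0 := by intro h; rw [sub_eq_zero] at h; exact absurd h.symm (ne_of_lt hcos1)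
  rw [show (1 : ℝ) - (1 - Real.cos s) = Real.cos s by ring]
  field_simp

lemma tendsto_div_nat (t : ℝ) (ht : 0 < t) :
    Tendsto (fun n : ℕ => t / n) atTop (nhdsWithin 0 (Ioi 0)) := by
  refine tendsto_nhdsWithin_iff.mpr ⟨tendsto_const_div_atTop_nhds_zero_nat t, ?_⟩
  filter_upwards [eventually_gt_atTop 0] with n hn
  exact div_pos ht (by exact_mod_cast hn)

lemma lemB (c t : ℝ) (hc : 0 < c) (ht : 0 < t) (N : ℕ → ℕ)
    (hN : Tendsto (fun n : ℕ => (N n : ℝ) / (n:ℝ)^2) atTop (nhds c)) :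
    Tendsto (fun n : ℕ => Real.cos (t / n) ^ (N n)) atTop (nhds (Real.exp (-(c * t^2/2)))) := by
  have hs := tendsto_div_nat t ht
  have hs0 : Tendsto (fun n : ℕ => t / n) atTop (nhds 0) := hs.mono_right nhdsWithin_le_nhds
  have hlog : Tendsto (fun n : ℕ => Real.log (Real.cos (t/n)) / (t/n)^2) atTop (nhds (-(1/2))) :=
    lemA.comp hs
  have hmain : Tendsto (fun n : ℕ => (N n : ℝ) * Real.log (Real.cos (t/n))) atTop
      (nhds (-(c * t^2/2))) := by
    have h := (hN.mul hlog).mul_const (t^2)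
    rw [show c * (-(1/2)) * t^2 = -(c * t^2/2) by ring] at h
    refine h.congr' ?_
    filter_upwards [eventually_gt_atTop 0] with n hn
    have hn' : (n:ℝ) ≠ 0 := by exact_mod_cast hn.ne'
    field_simp
  have hexp := (Real.continuous_exp.tendsto _).comp hmain
  refine hexp.congr' ?_
  have hsmall : ∀ᶠ n : ℕ in atTop, t / n < Real.pi / 2 :=
    hs0.eventually (gt_mem_nhds Real.pi_div_two_pos)
  filter_upwards [eventually_gt_atTop 0, hsmall] with n hn hsm
  have htn : 0 < t / (n:ℝ) := div_pos ht (by exact_mod_cast hn)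
  have hpos : 0 < Real.cos (t/n) :=
    Real.cos_pos_of_mem_Ioo ⟨by linarith [Real.pi_div_two_pos], hsm⟩
  simp only [Function.comp]
  rw [Real.exp_nat_mul, Real.exp_log hpos]

lemma dawson_eq (c : ℝ) (hc : 0 < c) :
    Real.sqrt (2*c) * ((1 / 2) * ∫ t in Set.Ioi (0:ℝ), Real.exp (-t ^ 2 / 4) * Real.sin ((1 / Real.sqrt (2*c)) * t))
      = c * ∫ t in Set.Ioi (0:ℝ), Real.exp (-(c * t^2/2)) * Real.sin t := by
  set b := Real.sqrt (2*c) with hbdef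
  have hb : 0 < b := Real.sqrt_pos.mpr (by linarith)
  have hb2 : b^2 = 2*c := Real.sq_sqrt (by linarith)
  have key := MeasureTheory.integral_comp_mul_left_Ioi
    (fun t => Real.exp (-t ^ 2 / 4) * Real.sin ((1 / b) * t)) 0 hb
  have h1 : (fun x : ℝ => Real.exp (-(b*x) ^ 2 / 4) * Real.sin ((1 / b) * (b*x)))
      = fun x : ℝ => Real.exp (-(c * x^2/2)) * Real.sin x := by
    funext x
    have h2 : (b*x)^2 = 2*c*x^2 := by rw [mul_pow, hb2]
    rw [h2, one_div, inv_mul_cancel_left₀ hb.ne']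
    ring_nf
  rw [h1, mul_zero] at key
  have : (∫ t in Set.Ioi (0:ℝ), Real.exp (-t ^ 2 / 4) * Real.sin ((1 / b) * t))
      = b * ∫ t in Set.Ioi (0:ℝ), Real.exp (-(c * t^2/2)) * Real.sin t := by
    rw [key, smul_eq_mul, ← mul_assoc, mul_inv_cancel₀ hb.ne', one_mul]
  rw [this, show b * (1/2 * (b * ∫ t in Set.Ioi (0:ℝ), Real.exp (-(c * t^2/2)) * Real.sin t))
      = (b^2) * (∫ t in Set.Ioi (0:ℝ), Real.exp (-(c * t^2/2)) * Real.sin t) / 2 from by ring,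
    hb2]
  ring

lemma lemDCT (c : ℝ) (hc : 0 < c) (N : ℕ → ℕ)
    (hN : Tendsto (fun n : ℕ => (N n : ℝ) / (n:ℝ)^2) atTop (nhds c)) :
    Tendsto (fun n : ℕ => ∫ t in Set.Ioi (0:ℝ),
        (Set.Ioc (0:ℝ) (n * (Real.pi/2))).indicator
          (fun t => Real.cos (t/n) ^ (N n) * Real.sin (((n:ℝ)+1) * (t/n))) t)
      atTop (nhds (∫ t in Set.Ioi (0:ℝ), Real.exp (-(c * t^2/2)) * Real.sin t)) := by
  have hpi := Real.pi_pos
  apply MeasureTheory.tendsto_integral_filter_of_dominated_convergence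
    (bound := fun t => Real.exp (-(c/Real.pi^2) * t^2))
  · -- measurability
    refine Eventually.of_forall fun n => ?_
    refine AEStronglyMeasurable.indicator ?_ measurableSet_Ioc
    exact (Continuous.mul (by continuity) (by continuity)).aestronglyMeasurable
  · -- bound
    have hev : ∀ᶠ n : ℕ in atTop, c/2 < (N n : ℝ) / (n:ℝ)^2 :=
      hN.eventually (lt_mem_nhds (by linarith))
    filter_upwards [hev, eventually_gt_atTop 0] with n hNn hn
    refine Eventually.of_forall fun t => ?_
    by_cases htmem : t ∈ Set.Ioc (0:ℝ) (n * (Real.pi/2))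
    · rw [Set.indicator_of_mem htmem]
      have hn' : (0:ℝ) < n := by exact_mod_cast hn
      have hx0 : 0 < t / n := div_pos htmem.1 hn'
      have hx2 : t / n ≤ Real.pi / 2 := by
        rw [div_le_iff₀ hn']
        calc t ≤ n * (Real.pi/2) := htmem.2
        _ = Real.pi / 2 * n := by ring
      have hcosnn : 0 ≤ Real.cos (t/n) := Real.cos_nonneg_of_mem_Icc ⟨by linarith, hx2⟩
      have hb1 : Real.cos (t/n) ≤ Real.exp (-(2/Real.pi^2) * (t/n)^2) := by
        calc Real.cos (t/n) ≤ 1 - 2/Real.pi^2 * (t/n)^2 := by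
              apply Real.cos_le_one_sub_mul_cos_sq
              rw [abs_of_pos hx0]; linarith
        _ ≤ Real.exp (-(2/Real.pi^2) * (t/n)^2) := by
              have := Real.add_one_le_exp (-(2/Real.pi^2) * (t/n)^2)
              linarith
      have hb2 : Real.cos (t/n) ^ (N n) ≤ Real.exp (-(2/Real.pi^2) * (t/n)^2) ^ (N n) :=
        pow_le_pow_left₀ hcosnn hb1 _
      have hb3 : Real.exp (-(2/Real.pi^2) * (t/n)^2) ^ (N n)
          = Real.exp (-(2 * (N n) / Real.pi^2) * (t/n)^2) := by
        rw [← Real.exp_nat_mul]; ring_nf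
      have hb4 : -(2 * (N n : ℝ) / Real.pi^2) * (t/n)^2 ≤ -(c/Real.pi^2) * t^2 := by
        have h1 : (t/n)^2 = t^2 / (n:ℝ)^2 := by rw [div_pow]
        have hn2 : (0:ℝ) < (n:ℝ)^2 := by positivity
        have hc2N : c ≤ 2 * (N n : ℝ) / (n:ℝ)^2 := by
          rw [mul_div_assoc]; linarith
        have hkey : c * t^2 ≤ (2 * (N n : ℝ) / (n:ℝ)^2) * t^2 :=
          mul_le_mul_of_nonneg_right hc2N (sq_nonneg t)
        rw [h1, show -(2 * (N n : ℝ) / Real.pi^2) * (t^2/(n:ℝ)^2)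
            = -((2 * (N n : ℝ) / (n:ℝ)^2) * t^2 / Real.pi^2) from by ring,
          show -(c/Real.pi^2) * t^2 = -(c * t^2 / Real.pi^2) from by ring,
          neg_le_neg_iff]
        exact div_le_div_of_nonneg_right hkey (by positivity)
      rw [Real.norm_eq_abs, abs_mul]
      calc |Real.cos (t/n) ^ (N n)| * |Real.sin (((n:ℝ)+1) * (t/n))|
          ≤ |Real.cos (t/n) ^ (N n)| * 1 := by
            apply mul_le_mul_of_nonneg_left (Real.abs_sin_le_one _) (abs_nonneg _)
        _ = Real.cos (t/n) ^ (N n) := by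
            rw [mul_one, abs_of_nonneg (pow_nonneg hcosnn _)]
        _ ≤ Real.exp (-(c/Real.pi^2) * t^2) := by
            refine (hb2.trans_eq hb3).trans (Real.exp_le_exp.mpr hb4)
    · rw [Set.indicator_of_notMem htmem]
      simp [Real.exp_nonneg]
  · -- integrability of bound
    exact (integrable_exp_neg_mul_sq (by positivity)).restrict
  · -- a.e. pointwise limit
    rw [MeasureTheory.ae_restrict_iff' measurableSet_Ioi]
    refine Eventually.of_forall fun t ht => ?_
    have ht' : 0 < t := ht
    have hcos := lemB c t hc ht' N hN
    have hsin : Tendsto (fun n : ℕ => Real.sin (((n:ℝ)+1) * (t/n))) atTop (nhds (Real.sin t)) := by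
      have harg : Tendsto (fun n : ℕ => t + t/n) atTop (nhds t) := by
        have := (tendsto_const_nhds (x := t) (f := atTop (α := ℕ))).add
          (tendsto_const_div_atTop_nhds_zero_nat t)
        simpa using this
      have := (Real.continuous_sin.tendsto t).comp harg
      refine this.congr' ?_
      filter_upwards [eventually_gt_atTop 0] with n hn
      have hn' : (n:ℝ) ≠ 0 := by exact_mod_cast hn.ne'
      simp only [Function.comp]
      congr 1
      field_simp
    have hmul := hcos.mul hsin
    refine hmul.congr' ?_
    have hbig : Tendsto (fun n : ℕ => (n:ℝ) * (Real.pi/2)) atTop atTop :=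
      Tendsto.atTop_mul_const (by linarith) tendsto_natCast_atTop_atTop
    filter_upwards [hbig.eventually_ge_atTop t] with n hn
    rw [Set.indicator_of_mem (Set.mem_Ioc.mpr ⟨ht', hn⟩)]

theorem stmt8 (c : ℝ) (hc : 0 < c) (m : ℕ → ℕ)
    (hm : Tendsto (fun n : ℕ => (m n : ℝ) / (n : ℝ) ^ 2) atTop (nhds c)) :
    Tendsto (fun n : ℕ => P2 (m n) n / n) atTop
      (nhds (Real.sqrt (2 * c) * dawson (1 / Real.sqrt (2 * c)))) := by
  have hpi := Real.pi_pos
  set N : ℕ → ℕ := fun n => n + m n - 2 with hNdef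
  have hsq : Tendsto (fun n : ℕ => ((n:ℝ))^2) atTop atTop :=
    (tendsto_pow_atTop two_ne_zero).comp tendsto_natCast_atTop_atTop
  have h1n : Tendsto (fun n : ℕ => (1:ℝ)/(n:ℝ)) atTop (nhds 0) :=
    tendsto_const_div_atTop_nhds_zero_nat 1
  have h2sq : Tendsto (fun n : ℕ => (2:ℝ)/(n:ℝ)^2) atTop (nhds 0) :=
    tendsto_const_nhds.div_atTop hsq
  have h1sq : Tendsto (fun n : ℕ => (1:ℝ)/(n:ℝ)^2) atTop (nhds 0) :=
    tendsto_const_nhds.div_atTop hsq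
  have hnsq : Tendsto (fun n : ℕ => (n:ℝ)/(n:ℝ)^2) atTop (nhds 0) := by
    refine h1n.congr' ?_
    filter_upwards [eventually_gt_atTop 0] with n hn
    have hn' : (n:ℝ) ≠ 0 := by exact_mod_cast hn.ne'
    field_simp
  have hN : Tendsto (fun n : ℕ => (N n : ℝ)/(n:ℝ)^2) atTop (nhds c) := by
    have h := (hnsq.add hm).sub h2sq
    rw [show (0:ℝ) + c - 0 = c by ring] at h
    refine h.congr' ?_
    filter_upwards [eventually_ge_atTop 2] with n hn
    have hcast : ((N n : ℕ) : ℝ) = (n:ℝ) + (m n : ℝ) - 2 := by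
      simp only [hNdef]
      rw [Nat.cast_sub (by omega)]
      push_cast; ring
    have hn' : (n:ℝ) ≠ 0 := by
      have : (0:ℕ) < n := by omega
      exact_mod_cast this.ne'
    rw [hcast]
    field_simp
  have hcoef : Tendsto (fun n : ℕ => ((n:ℝ) + (m n : ℝ) - 1)/(n:ℝ)^2) atTop (nhds c) := by
    have h := (hnsq.add hm).sub h1sq
    rw [show (0:ℝ) + c - 0 = c by ring] at h
    refine h.congr' ?_
    filter_upwards [eventually_gt_atTop 0] with n hn
    have hn' : (n:ℝ) ≠ 0 := by exact_mod_cast hn.ne'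
    field_simp
  have hDCT := lemDCT c hc N hN
  have hfinal := hcoef.mul hDCT
  have hgoalpt : Real.sqrt (2 * c) * dawson (1 / Real.sqrt (2 * c))
      = c * ∫ t in Set.Ioi (0:ℝ), Real.exp (-(c * t^2/2)) * Real.sin t := by
    rw [dawson]
    exact dawson_eq c hc
  rw [hgoalpt]
  refine hfinal.congr' ?_
  filter_upwards [eventually_ge_atTop 1] with n hn
  have hnpos : (0:ℝ) < n := by exact_mod_cast hn
  have hn' : (n:ℝ) ≠ 0 := hnpos.ne'
  have h0b : (0:ℝ) ≤ n * (Real.pi/2) := by positivity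
  have hsub := intervalIntegral.integral_comp_div (a := 0) (b := (n:ℝ)*(Real.pi/2))
    (c := (n:ℝ)) (f := fun θ => Real.cos θ ^ (N n) * Real.sin (((n:ℝ)+1)*θ)) hn'
  rw [zero_div, mul_div_cancel_left₀ _ hn', smul_eq_mul] at hsub
  have hind : (∫ t in Set.Ioi (0:ℝ),
      (Set.Ioc (0:ℝ) (n * (Real.pi/2))).indicator
        (fun t => Real.cos (t/n) ^ (N n) * Real.sin (((n:ℝ)+1) * (t/n))) t)
      = ∫ x in (0:ℝ)..((n:ℝ)*(Real.pi/2)),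
          Real.cos (x/n) ^ (N n) * Real.sin (((n:ℝ)+1) * (x/n)) := by
    rw [MeasureTheory.setIntegral_indicator measurableSet_Ioc,
      Set.inter_eq_self_of_subset_right Set.Ioc_subset_Ioi_self,
      intervalIntegral.integral_of_le h0b]
  simp only [P2]
  rw [hind, hsub]
  field_simp
  ring
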